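/- Let P be a path with k edges (k ∈ ℕ) whose vertices in order are x_0, x_1, …, x_k, and let L be an m-assignment for P with m ≥ 2. For each (c,d) ∈ L(x_0) × L(x_k), let N(c,d) be the number of proper L-colorings of P coloring x_0 with c and x_k with d. Then for every (c,d) ∈ L(x_0) × L(x_k), N(c,d) ≥ min{ ((m−1)^k − (−1)^k)/m , ((m−1)^k − (−1)^k)/m + (−1)^k }. -/

import Mathlib

open SimpleGraph Finset

/-- A proper `L`-coloring of `G`: each vertex gets a color from its list and adjacent
vertices get different colors. -/
def ProperLColoring {V : Type*} (G : SimpleGraph V) (L : V → Finset ℕ) (f : V → ℕ) : Prop :=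
  (∀ v, f v ∈ L v) ∧ ∀ ⦃u w⦄, G.Adj u w → f u ≠ f w

/-- `P(G,L)`: the number of proper `L`-colorings of `G`. -/
noncomputable def PList {V : Type*} (G : SimpleGraph V) (L : V → Finset ℕ) : ℕ :=
  Nat.card {f : V → ℕ // ProperLColoring G L f}

/-- `P(G,m)`: the number of proper colorings of `G` with colors from `{1, …, m}`. -/
noncomputable def PChrom {V : Type*} (G : SimpleGraph V) (m : ℕ) : ℕ :=
  PList G (fun _ => Finset.Icc 1 m)

/-- The list color function `P_ℓ(G,m)`: the minimum of `P(G,L)` over all `m`-assignments. -/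
noncomputable def PListFn {V : Type*} (G : SimpleGraph V) (m : ℕ) : ℕ :=
  sInf {n | ∃ L : V → Finset ℕ, (∀ v, (L v).card = m) ∧ n = PList G L}

/-- `G` is enumeratively chromatic-choosable: `P_ℓ(G,m) = P(G,m)` for all `m ∈ ℕ = {1,2,…}`. -/
def EnumChromChoosable {V : Type*} (G : SimpleGraph V) : Prop :=
  ∀ m : ℕ, 1 ≤ m → PListFn G m = PChrom G m

/-- Vertices of the theta graph `Θ(l1,l2,l3)`: the end vertices `u = Sum.inl false` and
`v = Sum.inl true`, together with the `lᵢ - 1` internal vertices of the `i`-th path. -/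
abbrev ThetaVert (l1 l2 l3 : ℕ) : Type :=
  Bool ⊕ (Σ i : Fin 3, Fin (![l1, l2, l3] i - 1))

/-- Edges of the theta graph (up to symmetrization): the internal vertices of the `i`-th path,
in order, form a path from `u` to `v`; if some path has length 1 then `u` and `v` are adjacent. -/
def thetaRel (l1 l2 l3 : ℕ) : ThetaVert l1 l2 l3 → ThetaVert l1 l2 l3 → Prop :=
  fun a b =>
    match a, b with
    | Sum.inl false, Sum.inl true => l1 = 1 ∨ l2 = 1 ∨ l3 = 1
    | Sum.inl false, Sum.inr ⟨_, j⟩ => (j : ℕ) = 0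
    | Sum.inr ⟨i, j⟩, Sum.inl true => (j : ℕ) + 2 = ![l1, l2, l3] i
    | Sum.inr ⟨i, j⟩, Sum.inr ⟨i', j'⟩ => i = i' ∧ (j : ℕ) + 1 = (j' : ℕ)
    | _, _ => False

/-- The theta graph `Θ(l1,l2,l3)`: two end vertices joined by three internally disjoint
paths of lengths `l1`, `l2`, `l3`. -/
def thetaGraph (l1 l2 l3 : ℕ) : SimpleGraph (ThetaVert l1 l2 l3) :=
  SimpleGraph.fromRel (thetaRel l1 l2 l3)

/-- A DP-cover `(L, H)` of `G`. -/
structure DPCover {V : Type*} (G : SimpleGraph V) (W : Type*) where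
  H : SimpleGraph W
  L : V → Set W
  partition : ∀ w : W, ∃! v : V, w ∈ L v
  matching : ∀ ⦃u v : V⦄, G.Adj u v → ∀ ⦃x y y' : W⦄, x ∈ L u → y ∈ L v → y' ∈ L v →
      H.Adj x y → H.Adj x y' → y = y'
  cross : ∀ ⦃x y : W⦄, H.Adj x y → ∃ u v, G.Adj u v ∧ x ∈ L u ∧ y ∈ L v

/-- A proper `H`-coloring: an independent transversal of the cover. -/
def DPCover.IsProperColoring {V W : Type*} {G : SimpleGraph V} (C : DPCover G W)
    (T : Set W) : Prop :=
  (∀ v : V, ∃! w : W, w ∈ T ∧ w ∈ C.L v) ∧ ∀ ⦃x y⦄, x ∈ T → y ∈ T → ¬ C.H.Adj x y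

/-- `P_DP(G, H)`: the number of proper `H`-colorings of `G`. -/
noncomputable def PDPCount {V W : Type*} {G : SimpleGraph V} (C : DPCover G W) : ℕ :=
  Nat.card {T : Set W // C.IsProperColoring T}

/-- The DP color function `P_DP(G,m)`: the minimum of `P_DP(G,H)` over all `m`-fold covers. -/
noncomputable def PDP {V : Type*} (G : SimpleGraph V) (m : ℕ) : ℕ :=
  sInf {n | ∃ (W : Type) (C : DPCover G W), (∀ v, Nat.card ↥(C.L v) = m) ∧ n = PDPCount C}

/-- A cover is full if the matching between the lists of adjacent vertices is perfect. -/
def DPCover.IsFull {V W : Type*} {G : SimpleGraph V} (C : DPCover G W) : Prop :=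
  ∀ ⦃u v : V⦄, G.Adj u v → ∀ x ∈ C.L u, ∃! y, y ∈ C.L v ∧ C.H.Adj x y
namespace PathAux

def aa (m : ℕ) : ℕ → ℕ
  | 0 => 0
  | 1 => 1
  | j+2 => (m-2) * aa m (j+1) + (m-1) * aa m j

lemma aa_cast (m : ℕ) (hm : 2 ≤ m) : ∀ j, (aa m j : ℚ) = (((m:ℚ)-1)^j - (-1)^j)/m := by
  have hm0 : (m:ℚ) ≠ 0 := by positivity
  intro j
  induction j using Nat.twoStepInduction with
  | zero => simp [aa]
  | one =>
    simp only [aa, Nat.cast_one, pow_one]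
    field_simp
    ring
  | more j ih1 ih2 =>
    have h2 : ((m-2 : ℕ) : ℚ) = (m:ℚ) - 2 := by
      push_cast [Nat.cast_sub hm]; ring
    have h1 : ((m-1 : ℕ) : ℚ) = (m:ℚ) - 1 := by
      push_cast [Nat.cast_sub (by omega : 1 ≤ m)]; ring
    show ((aa m (j+2) : ℚ)) = _
    rw [aa]
    push_cast [h1, h2, ih1, ih2]
    field_simp
    ring


section
variable {m : ℕ} (hm : 2 ≤ m)
include hm

lemma cast_m1 : ((m-1 : ℕ) : ℚ) = (m:ℚ) - 1 := by
  push_cast [Nat.cast_sub (by omega : 1 ≤ m)]; ring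

lemma aa_add (j : ℕ) : aa m j + aa m (j+1) = (m-1)^j := by
  have hm0 : (m:ℚ) ≠ 0 := by positivity
  have := aa_cast m hm j
  have := aa_cast m hm (j+1)
  apply Nat.cast_injective (R := ℚ)
  push_cast [cast_m1 hm, *]
  field_simp
  ring

lemma aa_even_succ (j : ℕ) (hj : Even j) : aa m (j+1) = (m-1)*aa m j + 1 := by
  have hm0 : (m:ℚ) ≠ 0 := by positivity
  apply Nat.cast_injective (R := ℚ)
  push_cast [cast_m1 hm, aa_cast m hm, hj.neg_one_pow, (hj.add_one).neg_one_pow]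
  field_simp
  ring

lemma aa_odd_succ (j : ℕ) (hj : Odd j) : aa m (j+1) + 1 = (m-1)*aa m j := by
  have hm0 : (m:ℚ) ≠ 0 := by positivity
  apply Nat.cast_injective (R := ℚ)
  have h2 : Even (j+1) := hj.add_one
  push_cast [cast_m1 hm, aa_cast m hm, hj.neg_one_pow, h2.neg_one_pow]
  field_simp
  ring

lemma m_aa_even (j : ℕ) (hj : Even j) : m * aa m j + 1 = (m-1)^j := by
  have hm0 : (m:ℚ) ≠ 0 := by positivity
  apply Nat.cast_injective (R := ℚ)
  push_cast [cast_m1 hm, aa_cast m hm, hj.neg_one_pow]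
  field_simp
  ring

end

def Ncnt (Λ : ℕ → Finset ℕ) (c : ℕ) : ℕ → ℕ → ℕ
  | 0, e => if e = c then 1 else 0
  | j+1, e => ∑ e' ∈ (Λ j).erase e, Ncnt Λ c j e'

def Tcnt (Λ : ℕ → Finset ℕ) (c j : ℕ) : ℕ := ∑ e ∈ Λ j, Ncnt Λ c j e

section
variable {m : ℕ} (hm : 2 ≤ m) {Λ : ℕ → Finset ℕ} (hΛ : ∀ j, (Λ j).card = m)
  {c : ℕ} (hc : c ∈ Λ 0)

include hc in
lemma Tcnt_zero : Tcnt Λ c 0 = 1 := by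
  simp [Tcnt, Ncnt, Finset.sum_ite_eq' (Λ 0) c (fun _ => 1), hc]

include hΛ in
lemma Tcnt_succ (j : ℕ) : (m-1) * Tcnt Λ c j ≤ Tcnt Λ c (j+1) := by
  have h : Tcnt Λ c (j+1)
      = ∑ e' ∈ Λ j, ((Λ (j+1)).erase e').card * Ncnt Λ c j e' := by
    unfold Tcnt
    simp only [Ncnt]
    rw [Finset.sum_comm' (s := Λ (j+1)) (t := fun e => (Λ j).erase e)
        (t' := Λ j) (s' := fun e' => (Λ (j+1)).erase e')]
    · simp [Finset.sum_const, mul_comm]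
    · intro x y
      simp only [Finset.mem_erase]
      tauto
  rw [h, Tcnt, Finset.mul_sum]
  apply Finset.sum_le_sum
  intro e' _
  apply Nat.mul_le_mul_right
  have := hΛ (j+1)
  by_cases he : e' ∈ Λ (j+1)
  · rw [Finset.card_erase_of_mem he]; omega
  · rw [Finset.erase_eq_of_notMem he]; omega

include hΛ hc in
lemma Tcnt_lower (j : ℕ) : (m-1)^j ≤ Tcnt Λ c j := by
  induction j with
  | zero => simp [Tcnt_zero (Λ := Λ) hc]
  | succ j ih =>
    calc (m-1)^(j+1) = (m-1) * (m-1)^j := by ring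
    _ ≤ (m-1) * Tcnt Λ c j := Nat.mul_le_mul_left _ ih
    _ ≤ Tcnt Λ c (j+1) := Tcnt_succ hΛ j

include hm hΛ hc in
lemma main_inv : ∀ j, 1 ≤ j → ∃ δ : ℕ,
    (∀ e, e ≠ δ → aa m j ≤ Ncnt Λ c j e) ∧
    (∀ e, aa m j ≤ Ncnt Λ c j e + 1) ∧
    (Even j → ∀ e, aa m j ≤ Ncnt Λ c j e) := by
  have hcard_er : ∀ j e, m - 1 ≤ ((Λ j).erase e).card := by
    intro j e
    have := hΛ j
    by_cases he : e ∈ Λ j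
    · rw [Finset.card_erase_of_mem he]; omega
    · rw [Finset.erase_eq_of_notMem he]; omega
  intro j
  induction j with
  | zero => omega
  | succ j ih =>
    intro _
    by_cases hj0 : j = 0
    · subst hj0
      refine ⟨c, ?_, ?_, by simp⟩
      · intro e he
        have hN : Ncnt Λ c 1 e = 1 := by
          have : c ∈ (Λ 0).erase e := Finset.mem_erase.2 ⟨fun h => he h.symm, hc⟩
          simp [Ncnt, Finset.sum_ite_eq' ((Λ 0).erase e) c (fun _ => 1), this]
        rw [hN]
        have h1 : aa m (0+1) = 1 := rfl
        omega
      · intro e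
        have h1 : aa m (0+1) = 1 := rfl
        omega
    · have hj1 : 1 ≤ j := by omega
      obtain ⟨δ, h1, h2, h3⟩ := ih hj1
      rcases Nat.even_or_odd j with hje | hjo
      · -- j even (≥ 2): pigeonhole step, j+1 odd
        have h3' := h3 hje
        have hpig : ∃ δ' ∈ Λ j, aa m j + 1 ≤ Ncnt Λ c j δ' := by
          by_contra hcon
          push_neg at hcon
          have hT : Tcnt Λ c j ≤ m * aa m j := by
            have : Tcnt Λ c j ≤ (Λ j).card • aa m j := by
              apply Finset.sum_le_card_nsmul
              intro x hx
              have := hcon x hx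
              omega
            simpa [hΛ j, smul_eq_mul] using this
          have hT2 := Tcnt_lower hΛ hc j
          have hme := m_aa_even hm j hje
          omega
        obtain ⟨δ', hδΛ, hδ⟩ := hpig
        have haes := aa_even_succ hm j hje
        refine ⟨δ', ?_, ?_, ?_⟩
        · intro e he
          show aa m (j+1) ≤ ∑ e' ∈ (Λ j).erase e, Ncnt Λ c j e'
          have hmem : δ' ∈ (Λ j).erase e := Finset.mem_erase.2 ⟨fun h => he h.symm, hδΛ⟩
          rw [← Finset.add_sum_erase _ _ hmem]
          have hb : (((Λ j).erase e).erase δ').card * aa m j ≤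
              ∑ e' ∈ ((Λ j).erase e).erase δ', Ncnt Λ c j e' := by
            simpa [smul_eq_mul] using
              Finset.card_nsmul_le_sum (((Λ j).erase e).erase δ') _ _ (fun x _ => h3' x)
          have hc1 : (((Λ j).erase e).erase δ').card = ((Λ j).erase e).card - 1 :=
            Finset.card_erase_of_mem hmem
          have hc2 := hcard_er j e
          calc aa m (j+1) = (m-1) * aa m j + 1 := haes
          _ ≤ ((m-2) * aa m j + (aa m j + 1)) := by
              have : (m-1) * aa m j = (m-2) * aa m j + aa m j := by
                have : m - 1 = (m-2) + 1 := by omega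
                rw [this, add_mul, one_mul]
              omega
          _ ≤ (((Λ j).erase e).erase δ').card * aa m j + (aa m j + 1) := by
              have : m - 2 ≤ (((Λ j).erase e).erase δ').card := by omega
              exact Nat.add_le_add_right (Nat.mul_le_mul_right _ this) _
          _ ≤ ∑ e' ∈ ((Λ j).erase e).erase δ', Ncnt Λ c j e' + Ncnt Λ c j δ' := by
              omega
          _ = Ncnt Λ c j δ' + ∑ e' ∈ ((Λ j).erase e).erase δ', Ncnt Λ c j e' := by ring
        · intro e
          show aa m (j+1) ≤ (∑ e' ∈ (Λ j).erase e, Ncnt Λ c j e') + 1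
          have hb : ((Λ j).erase e).card * aa m j ≤
              ∑ e' ∈ (Λ j).erase e, Ncnt Λ c j e' := by
            simpa [smul_eq_mul] using
              Finset.card_nsmul_le_sum ((Λ j).erase e) _ _ (fun x _ => h3' x)
          have hc2 := hcard_er j e
          have : (m-1) * aa m j ≤ ((Λ j).erase e).card * aa m j :=
            Nat.mul_le_mul_right _ hc2
          omega
        · intro hev
          exact absurd (Nat.even_add_one.mp hev) (by simpa using hje)
      · -- j odd: j+1 even
        have haos := aa_odd_succ hm j hjo
        have hall : ∀ e, aa m (j+1) ≤ Ncnt Λ c (j+1) e := by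
          intro e
          show aa m (j+1) ≤ ∑ e' ∈ (Λ j).erase e, Ncnt Λ c j e'
          have key : ((Λ j).erase e).card * aa m j ≤
              (∑ e' ∈ (Λ j).erase e, Ncnt Λ c j e') + 1 := by
            by_cases hδ : δ ∈ (Λ j).erase e
            · rw [← Finset.add_sum_erase _ _ hδ]
              have hb : (((Λ j).erase e).erase δ).card * aa m j ≤
                  ∑ e' ∈ ((Λ j).erase e).erase δ, Ncnt Λ c j e' := by
                simpa [smul_eq_mul] using
                  Finset.card_nsmul_le_sum (((Λ j).erase e).erase δ) _ _
                    (fun x hx => h1 x (Finset.mem_erase.1 hx).1)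
              have hc1 : (((Λ j).erase e).erase δ).card = ((Λ j).erase e).card - 1 :=
                Finset.card_erase_of_mem hδ
              have hcpos : 1 ≤ ((Λ j).erase e).card :=
                Finset.card_pos.2 ⟨δ, hδ⟩
              have h2δ := h2 δ
              rw [hc1] at hb
              have hsplit : ((Λ j).erase e).card * aa m j
                  = (((Λ j).erase e).card - 1) * aa m j + aa m j := by
                obtain ⟨t, ht⟩ : ∃ t, ((Λ j).erase e).card = t + 1 :=
                  ⟨((Λ j).erase e).card - 1, by omega⟩
                rw [ht, Nat.add_sub_cancel, add_mul, one_mul]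
              omega
            · have hb : ((Λ j).erase e).card * aa m j ≤
                  ∑ e' ∈ (Λ j).erase e, Ncnt Λ c j e' := by
                simpa [smul_eq_mul] using
                  Finset.card_nsmul_le_sum ((Λ j).erase e) _ _
                    (fun x hx => h1 x (fun hxδ => hδ (hxδ ▸ hx)))
              omega
          have hc2 := hcard_er j e
          have hmm : (m-1) * aa m j ≤ ((Λ j).erase e).card * aa m j :=
            Nat.mul_le_mul_right _ hc2
          omega
        exact ⟨0, fun e _ => hall e, fun e => le_trans (hall e) (Nat.le_succ _), fun _ e => hall e⟩

end

def PathCond (k : ℕ) (Λ : ℕ → Finset ℕ) (c d : ℕ) (f : Fin (k+1) → ℕ) : Prop :=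
  (∀ i : Fin (k+1), f i ∈ Λ i.val) ∧
  (∀ i : ℕ, ∀ h : i + 1 < k + 1, f ⟨i, by omega⟩ ≠ f ⟨i+1, h⟩) ∧
  f ⟨0, by omega⟩ = c ∧ f ⟨k, by omega⟩ = d

instance pathCondFinite (k : ℕ) (Λ : ℕ → Finset ℕ) (c d : ℕ) :
    Finite {f : Fin (k+1) → ℕ // PathCond k Λ c d f} := by
  apply Finite.of_injective
    (f := fun f => (fun i => (⟨f.1 i, f.2.1 i⟩ : {x // x ∈ Λ i.val}) : (i : Fin (k+1)) → {x // x ∈ Λ i.val}))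
  intro f g hfg
  apply Subtype.ext
  funext i
  exact congrArg Subtype.val (congrFun hfg i)

lemma card_pathCond : ∀ (k : ℕ) (Λ : ℕ → Finset ℕ) (c : ℕ), c ∈ Λ 0 → ∀ d ∈ Λ k,
    Nat.card {f : Fin (k+1) → ℕ // PathCond k Λ c d f} = Ncnt Λ c k d := by
  intro k
  induction k with
  | zero =>
    intro Λ c hc d hd
    by_cases hdc : d = c
    · subst hdc
      have : Nat.card {f : Fin 1 → ℕ // PathCond 0 Λ d d f} = 1 := by
        rw [Nat.card_eq_one_iff_unique]
        constructor
        · constructor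
          intro f g
          apply Subtype.ext
          funext i
          have hi : i = ⟨0, by omega⟩ := Fin.ext (by omega)
          rw [hi, f.2.2.2.2, g.2.2.2.2]
        · exact ⟨⟨fun _ => d, fun i => by have hi : i = ⟨0, by omega⟩ := Fin.ext (by omega); rw [hi]; exact hd,
            by omega, rfl, rfl⟩⟩
      rw [this]
      simp [Ncnt]
    · have : IsEmpty {f : Fin 1 → ℕ // PathCond 0 Λ c d f} := by
        constructor
        intro f
        exact hdc (f.2.2.2.2.symm.trans f.2.2.2.1)
      rw [Nat.card_of_isEmpty]
      simp [Ncnt, hdc]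
  | succ k ih =>
    intro Λ c hc d hd
    classical
    letI : Fintype {f : Fin (k+2) → ℕ // PathCond (k+1) Λ c d f} := Fintype.ofFinite _
    set α := {f : Fin (k+2) → ℕ // PathCond (k+1) Λ c d f} with hα
    have hv : ∀ a : α, a.1 ⟨k, by omega⟩ ∈ (Λ k).erase d := by
      intro a
      refine Finset.mem_erase.2 ⟨?_, a.2.1 ⟨k, by omega⟩⟩
      have := a.2.2.1 k (by omega)
      have hlast := a.2.2.2.2
      intro hcon
      exact this (hcon.trans hlast.symm)
    have hcardsum : Nat.card α
        = ∑ e ∈ (Λ k).erase d, Nat.card {a : α // a.1 ⟨k, by omega⟩ = e} := by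
      rw [Nat.card_eq_fintype_card, ← Finset.card_univ,
        Finset.card_eq_sum_card_fiberwise (f := fun a : α => a.1 ⟨k, by omega⟩)
          (t := (Λ k).erase d) (fun a _ => hv a)]
      refine Finset.sum_congr rfl fun e _ => ?_
      rw [Nat.card_eq_fintype_card, Fintype.card_subtype]
    have hfiber : ∀ e ∈ (Λ k).erase d, Nat.card {a : α // a.1 ⟨k, by omega⟩ = e}
        = Nat.card {g : Fin (k+1) → ℕ // PathCond k Λ c e g} := by
      intro e he
      apply Nat.card_congr
      refine ⟨fun a => ⟨fun i => a.1.1 ⟨i.val, by omega⟩, ?_, ?_, ?_, ?_⟩,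
        fun b => ⟨⟨fun i => if h : i.val < k+1 then b.1 ⟨i.val, h⟩ else d, ?_, ?_, ?_, ?_⟩, ?_⟩,
        ?_, ?_⟩
      · intro i
        exact a.1.2.1 ⟨i.val, by omega⟩
      · intro i h
        exact a.1.2.2.1 i (by omega)
      · exact a.1.2.2.2.1
      · exact a.2
      · -- memberships for extension
        intro i
        by_cases h : i.val < k+1
        · simpa [h] using b.2.1 ⟨i.val, h⟩
        · have hik : i.val = k+1 := by omega
          simp [h, hik, hd]
      · intro i h
        by_cases h2 : i + 1 < k + 1
        · have h1 : i < k + 1 := by omega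
          simpa [h1, h2] using b.2.2.1 i h2
        · have h3 : i + 1 = k + 1 := by omega
          have h1 : i < k + 1 := by omega
          have hik : i = k := by omega
          subst hik
          simp only [dif_pos h1, dif_neg (by omega : ¬ (i + 1 < i + 1))]
          exact fun hcon => (Finset.mem_erase.1 he).1 ((b.2.2.2.2).symm.trans hcon)
      · simpa using b.2.2.2.1
      · simp
      · have h1 : k < k + 1 := by omega
        simpa [h1] using b.2.2.2.2
      · -- left inverse
        intro a
        apply Subtype.ext
        apply Subtype.ext
        funext i
        by_cases h : i.val < k+1
        · simp only [dif_pos h]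
        · have hik : i = ⟨k+1, by omega⟩ := by
            apply Fin.ext; simp; omega
          rw [hik]
          simp only [dif_neg (by omega : ¬ (k+1 < k+1))]
          exact a.1.2.2.2.2.symm
      · -- right inverse
        intro b
        apply Subtype.ext
        funext i
        have h : i.val < k+1 := i.isLt
        simp only [dif_pos h]
    calc Nat.card α = ∑ e ∈ (Λ k).erase d, Nat.card {a : α // a.1 ⟨k, by omega⟩ = e} :=
        hcardsum
    _ = ∑ e ∈ (Λ k).erase d, Ncnt Λ c k e := by
        refine Finset.sum_congr rfl fun e he => ?_
        rw [hfiber e he, ih Λ c hc e (Finset.mem_erase.1 he).2]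
    _ = Ncnt Λ c (k+1) d := rfl

end PathAux

theorem path_list_coloring_count_lower_bound (k : ℕ) (hk : 1 ≤ k) (m : ℕ) (hm : 2 ≤ m)
    (L : Fin (k + 1) → Finset ℕ) (hL : ∀ v, (L v).card = m)
    (c d : ℕ) (hc : c ∈ L 0) (hd : d ∈ L (Fin.last k)) :
    min ((((m : ℚ) - 1) ^ k - (-1) ^ k) / m)
        ((((m : ℚ) - 1) ^ k - (-1) ^ k) / m + (-1) ^ k) ≤
      (Nat.card {f : Fin (k + 1) → ℕ // ProperLColoring (pathGraph (k + 1)) L f ∧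
        f 0 = c ∧ f (Fin.last k) = d} : ℚ) := by
  set Λ : ℕ → Finset ℕ := fun j => L ⟨min j k, by omega⟩ with hΛdef
  have hΛL : ∀ i : Fin (k+1), Λ i.val = L i := by
    intro i
    have h1 : min i.val k = i.val := Nat.min_eq_left (by omega)
    simp only [hΛdef, h1]
  have hΛ : ∀ j, (Λ j).card = m := fun j => hL _
  have hc' : c ∈ Λ 0 := by
    have h0 : Λ 0 = L 0 := by simpa using hΛL 0
    exact h0 ▸ hc
  have hd' : d ∈ Λ k := by
    have h0 : Λ k = L (Fin.last k) := by simpa using hΛL (Fin.last k)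
    exact h0 ▸ hd
  have hiff : ∀ f : Fin (k+1) → ℕ,
      (ProperLColoring (pathGraph (k+1)) L f ∧ f 0 = c ∧ f (Fin.last k) = d)
        ↔ PathAux.PathCond k Λ c d f := by
    intro f
    constructor
    · rintro ⟨⟨hmem, hadj⟩, h0, hl⟩
      refine ⟨fun i => by rw [hΛL i]; exact hmem i, ?_, ?_, ?_⟩
      · intro i h
        apply hadj
        rw [pathGraph_adj]
        left
        rfl
      · rw [show (⟨0, by omega⟩ : Fin (k+1)) = 0 from Fin.ext (by simp)]
        exact h0
      · exact hl
    · rintro ⟨hmem, hchain, h0, hl⟩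
      refine ⟨⟨fun v => by rw [← hΛL v]; exact hmem v, ?_⟩, ?_, ?_⟩
      · intro u w hadj
        rw [pathGraph_adj] at hadj
        rcases hadj with h | h
        · have h2 : u.val + 1 < k + 1 := by omega
          have := hchain u.val h2
          have hu : (⟨u.val, by omega⟩ : Fin (k+1)) = u := Fin.ext rfl
          have hw : (⟨u.val+1, h2⟩ : Fin (k+1)) = w := Fin.ext h
          rwa [hu, hw] at this
        · have h2 : w.val + 1 < k + 1 := by omega
          have := hchain w.val h2
          have hu : (⟨w.val, by omega⟩ : Fin (k+1)) = w := Fin.ext rfl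
          have hw : (⟨w.val+1, h2⟩ : Fin (k+1)) = u := Fin.ext h
          rw [hu, hw] at this
          exact this.symm
      · rw [← show (⟨0, by omega⟩ : Fin (k+1)) = 0 from Fin.ext (by simp)]
        exact h0
      · exact hl
  have hcard : Nat.card {f : Fin (k + 1) → ℕ // ProperLColoring (pathGraph (k + 1)) L f ∧
      f 0 = c ∧ f (Fin.last k) = d} = PathAux.Ncnt Λ c k d := by
    rw [Nat.card_congr (Equiv.subtypeEquivRight hiff)]
    exact PathAux.card_pathCond k Λ c hc' d hd'
  rw [hcard]
  have hcast := PathAux.aa_cast m hm k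
  obtain ⟨δ, h1, h2, h3⟩ := PathAux.main_inv hm hΛ hc' k hk
  rcases Nat.even_or_odd k with hke | hko
  · have hN : PathAux.aa m k ≤ PathAux.Ncnt Λ c k d := h3 hke d
    have hx : ((-1:ℚ))^k = 1 := hke.neg_one_pow
    rw [hx, min_eq_left (le_add_of_nonneg_right zero_le_one)]
    rw [show (((m:ℚ) - 1)^k - 1)/m = ((((m:ℚ)-1)^k - (-1)^k)/m) from by rw [hx]]
    rw [← hcast]
    exact_mod_cast hN
  · have hN : PathAux.aa m k ≤ PathAux.Ncnt Λ c k d + 1 := h2 d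
    have hx : ((-1:ℚ))^k = -1 := hko.neg_one_pow
    rw [hx, min_eq_right (by linarith)]
    have hc2 : (PathAux.aa m k : ℚ) = (((m:ℚ)-1)^k + 1)/m := by rw [hcast, hx]; ring_nf
    have hc3 : (PathAux.aa m k : ℚ) ≤ (PathAux.Ncnt Λ c k d : ℚ) + 1 := by exact_mod_cast hN
    rw [show ((m:ℚ)-1)^k - -1 = ((m:ℚ)-1)^k + 1 from by ring]
    linarith
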